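/- Define the bracket {w(p), w(q)}¹ = ((w(p) - w(q))/(p - q)) · (w(p) - w(q)) = (w(p)-w(q))²/(p-q) on functions of distinct points p, q. Then the cyclic sum of double brackets vanishes formally: if one treats w(p), w(q), w(r) as coordinates x, y, z on ℂ³ (for fixed distinct p, q, r) and defines the Poisson bracket of coordinate functions by {x,y} = (x-y)²/(p-q), {y,z} = (y-z)²/(q-r), {z,x} = (z-x)²/(r-p), extended as a biderivation, then {{x,y},z} + {{y,z},x} + {{z,x},y} = 0. -/
import Mathlib


/-- Jacobi identity for the Atiyah–Hitchin bracket `{x,y} = (x-y)²/(p-q)` on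
coordinates `x = w(p)`, `y = w(q)`, `z = w(r)`, extended as a biderivation:
`{{x,y},z} = ∂_x{x,y}·{x,z} + ∂_y{x,y}·{y,z}`, etc. -/
theorem stmt_5 (p q r x y z : ℂ) (hpq : p ≠ q) (hqr : q ≠ r) (hrp : r ≠ p) :
    -- {{x,y},z}
    ((2 * (x - y) / (p - q)) * (-((z - x) ^ 2 / (r - p)))
      + (-(2 * (x - y)) / (p - q)) * ((y - z) ^ 2 / (q - r)))
    -- {{y,z},x}
    + ((2 * (y - z) / (q - r)) * (-((x - y) ^ 2 / (p - q)))
      + (-(2 * (y - z)) / (q - r)) * ((z - x) ^ 2 / (r - p)))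
    -- {{z,x},y}
    + ((2 * (z - x) / (r - p)) * (-((y - z) ^ 2 / (q - r)))
      + (-(2 * (z - x)) / (r - p)) * ((x - y) ^ 2 / (p - q))) = 0 := by
  have h1 : p - q ≠ 0 := sub_ne_zero.mpr hpq
  have h2 : q - r ≠ 0 := sub_ne_zero.mpr hqr
  have h3 : r - p ≠ 0 := sub_ne_zero.mpr hrp
  field_simp
  ring
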